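/- Let Φ_n ∈ ℚ[X_1,...,X_n] be defined by Φ_n = Σ_{b_1 + 2b_2 + ... + n b_n = n} ((b_1+...+b_n)!/(b_1!...b_n!)) X_1^{b_1}...X_n^{b_n}, with the convention that each X_i has weight i and Φ_n is weight-homogeneous of weight n. Then for every k ≥ 1, Φ_k(−Φ_1, ..., −Φ_k) = −X_k, where Φ_j(−Φ_1,...,−Φ_j) means substituting −Φ_i for X_i. -/

import Mathlib

open MvPolynomial

/-- `Phi n` is the polynomial `Φ_n = Σ_{b₁ + 2b₂ + ... + n bₙ = n}
((b₁+...+bₙ)!/(b₁!...bₙ!)) X₁^{b₁}...Xₙ^{bₙ}`, where the variable `X_{i+1}` is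
represented by `MvPolynomial.X i`. -/
noncomputable def Phi (n : ℕ) : MvPolynomial ℕ ℚ :=
  ∑ b ∈ (Fintype.piFinset fun _ : Fin n => Finset.range (n + 1)).filter
      (fun b => ∑ i, (i.1 + 1) * b i = n),
    (((∑ i, b i).factorial : ℚ) / ∏ i, ((b i).factorial : ℚ)) •
      ∏ i, MvPolynomial.X i.1 ^ b i


open Finset

noncomputable section

def wt (b : ℕ →₀ ℕ) : ℕ := b.sum fun i m => (i + 1) * m
def SS (b : ℕ →₀ ℕ) : ℕ := b.sum fun _ m => m
def PP (b : ℕ →₀ ℕ) : ℚ := b.prod fun _ m => (m.factorial : ℚ)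
def mon (b : ℕ →₀ ℕ) : MvPolynomial ℕ ℚ := b.prod fun i m => X i ^ m
def fc (b : ℕ →₀ ℕ) : ℚ := (SS b).factorial / PP b

def D (n : ℕ) : Finset (ℕ →₀ ℕ) :=
  ((Finset.range n).finsupp (fun _ => Finset.range (n + 1))).filter fun b => wt b = n

lemma le_wt {b : ℕ →₀ ℕ} {i : ℕ} (h : i ∈ b.support) : (i + 1) * b i ≤ wt b := by
  exact Finset.single_le_sum (f := fun j => (j + 1) * b j) (fun j _ => Nat.zero_le _) h

lemma mem_D {n : ℕ} {b : ℕ →₀ ℕ} : b ∈ D n ↔ wt b = n := by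
  constructor
  · exact fun h => (Finset.mem_filter.1 h).2
  · intro h
    refine Finset.mem_filter.2 ⟨Finset.mem_finsupp_iff.2 ⟨?_, ?_⟩, h⟩
    · intro i hi
      have h1 : 1 ≤ b i := Nat.one_le_iff_ne_zero.2 (Finsupp.mem_support_iff.1 hi)
      have := le_wt hi
      rw [h] at this
      have : i + 1 ≤ n := le_trans (Nat.le_mul_of_pos_right _ h1) this
      exact Finset.mem_range.2 (by omega)
    · intro i _
      rcases Nat.eq_zero_or_pos (b i) with h0 | h0
      · simp [h0]
      · have hi : i ∈ b.support := Finsupp.mem_support_iff.2 (by omega)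
        have := le_wt hi
        rw [h] at this
        have : b i ≤ n := le_trans (Nat.le_mul_of_pos_left _ (by omega)) this
        exact Finset.mem_range.2 (by omega)

lemma wt_add (a b : ℕ →₀ ℕ) : wt (a + b) = wt a + wt b :=
  Finsupp.sum_add_index' (fun i => by simp) (fun i m1 m2 => by ring)

lemma SS_add (a b : ℕ →₀ ℕ) : SS (a + b) = SS a + SS b :=
  Finsupp.sum_add_index' (fun i => rfl) (fun i m1 m2 => rfl)

lemma wt_single (j m : ℕ) : wt (Finsupp.single j m) = (j + 1) * m :=
  Finsupp.sum_single_index (by simp)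

lemma SS_single (j m : ℕ) : SS (Finsupp.single j m) = m :=
  Finsupp.sum_single_index rfl

lemma wt_eq_zero {b : ℕ →₀ ℕ} (h : wt b = 0) : b = 0 := by
  ext i
  rcases Nat.eq_zero_or_pos (b i) with h0 | h0
  · simp [h0]
  · have hi : i ∈ b.support := Finsupp.mem_support_iff.2 (by omega)
    have := le_wt hi
    rw [h] at this
    exfalso; nlinarith

lemma SS_pos {b : ℕ →₀ ℕ} (h : b ≠ 0) : 0 < SS b := by
  rcases Finsupp.support_nonempty_iff.2 h with ⟨i, hi⟩
  have h1 : 1 ≤ b i := Nat.one_le_iff_ne_zero.2 (Finsupp.mem_support_iff.1 hi)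
  exact lt_of_lt_of_le h1 (Finset.single_le_sum (fun j _ => Nat.zero_le _) hi)

lemma PP_ne_zero (b : ℕ →₀ ℕ) : PP b ≠ 0 := by
  refine Finset.prod_ne_zero_iff.2 fun i _ => ?_
  simp [Nat.factorial_ne_zero]

lemma mon_add (a b : ℕ →₀ ℕ) : mon (a + b) = mon a * mon b :=
  Finsupp.prod_add_index' (fun i => pow_zero _) (fun i m1 m2 => pow_add _ _ _)

lemma mon_single (j m : ℕ) : mon (Finsupp.single j m) = X j ^ m :=
  Finsupp.prod_single_index (pow_zero _)

lemma SS_sum_support (b : ℕ →₀ ℕ) : ∑ j ∈ b.support, b j = SS b := rfl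

end

noncomputable section

def phiF (n : ℕ) : MvPolynomial ℕ ℚ := ∑ b ∈ D n, fc b • mon b

/-- extension of a `Fin n`-tuple to a finsupp on `ℕ` -/
def ext' (n : ℕ) (b : Fin n → ℕ) : ℕ →₀ ℕ :=
  Finsupp.onFinset (Finset.range n) (fun j => if h : j < n then b ⟨j, h⟩ else 0)
    (fun j hj => by
      rw [Finset.mem_range]
      by_contra h
      simp [dif_neg h] at hj)

lemma ext'_apply_lt (n : ℕ) (b : Fin n → ℕ) (i : Fin n) : ext' n b i.1 = b i := by
  simp [ext', i.2]

lemma ext'_support (n : ℕ) (b : Fin n → ℕ) : (ext' n b).support ⊆ Finset.range n :=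
  Finsupp.support_onFinset_subset

lemma ext'_sum {M : Type*} [AddCommMonoid M] (n : ℕ) (b : Fin n → ℕ) (g : ℕ → ℕ → M)
    (hg : ∀ j, g j 0 = 0) : (ext' n b).sum g = ∑ i : Fin n, g i.1 (b i) := by
  rw [Finsupp.sum_of_support_subset _ (ext'_support n b) g (fun j _ => hg j)]
  rw [← Fin.sum_univ_eq_sum_range (fun j => g j (ext' n b j)) n]
  exact Finset.sum_congr rfl fun i _ => by rw [ext'_apply_lt]

lemma ext'_prod {M : Type*} [CommMonoid M] (n : ℕ) (b : Fin n → ℕ) (g : ℕ → ℕ → M)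
    (hg : ∀ j, g j 0 = 1) : (ext' n b).prod g = ∏ i : Fin n, g i.1 (b i) := by
  rw [Finsupp.prod_of_support_subset _ (ext'_support n b) g (fun j _ => hg j)]
  rw [← Fin.prod_univ_eq_prod_range (fun j => g j (ext' n b j)) n]
  exact Finset.prod_congr rfl fun i _ => by rw [ext'_apply_lt]

lemma Phi_eq (n : ℕ) : Phi n = phiF n := by
  rw [Phi, phiF]
  refine Finset.sum_nbij' (i := fun b => ext' n b) (j := fun B (i : Fin n) => B i.1)
    ?_ ?_ ?_ ?_ ?_
  · intro b hb
    rw [Finset.mem_filter] at hb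
    refine mem_D.2 ?_
    rw [wt, ext'_sum n b _ (fun j => by ring)]
    exact hb.2
  · intro B hB
    have hwt := mem_D.1 hB
    have hB' := (Finset.mem_filter.1 hB).1
    rw [Finset.mem_finsupp_iff] at hB'
    have hsum : ∑ i : Fin n, (i.1 + 1) * B i.1 = wt B := by
      rw [wt, Finsupp.sum_of_support_subset _ hB'.1 _ (fun j _ => by ring)]
      exact Fin.sum_univ_eq_sum_range (fun j => (j + 1) * B j) n
    refine Finset.mem_filter.2 ⟨Fintype.mem_piFinset.2 fun i => ?_, by rw [hsum, hwt]⟩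
    exact hB'.2 i.1 (Finset.mem_range.2 i.2)
  · intro b _
    funext i
    exact ext'_apply_lt n b i
  · intro B hB
    have hB' := (Finset.mem_filter.1 hB).1
    rw [Finset.mem_finsupp_iff] at hB'
    ext j
    by_cases h : j < n
    · exact ext'_apply_lt n (fun i : Fin n => B i.1) ⟨j, h⟩
    · have h1 : (ext' n (fun i : Fin n => B i.1)) j = 0 := by simp [ext', h]
      have h2 : B j = 0 := by
        by_contra h2
        exact h (Finset.mem_range.1 (hB'.1 (Finsupp.mem_support_iff.2 h2)))
      rw [h1, h2]
  · intro b _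
    rw [fc, mon, SS, PP, ext'_sum n b _ (fun j => rfl),
      ext'_prod n b (fun i m => (m.factorial : ℚ)) (fun j => by simp),
      ext'_prod n b (fun i m => (X i ^ m : MvPolynomial ℕ ℚ)) (fun j => pow_zero _)]

end

noncomputable section

lemma D_zero : D 0 = {0} := by
  ext b
  rw [mem_D, Finset.mem_singleton]
  constructor
  · exact wt_eq_zero
  · rintro rfl; simp [wt]

lemma phiF_zero : phiF 0 = 1 := by
  rw [phiF, D_zero]
  simp [fc, mon, SS, PP]

lemma erase_add_single (b' : ℕ →₀ ℕ) (j : ℕ) :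
    (b' + Finsupp.single j 1).erase j = b'.erase j := by
  ext i
  by_cases h : i = j
  · subst h; simp
  · simp [Finsupp.erase_ne h]

lemma phiF_rec (n : ℕ) (hn : 1 ≤ n) :
    phiF n = ∑ j ∈ Finset.range n, X j * phiF (n - 1 - j) := by
  -- RHS as a sigma sum
  have hR : ∑ j ∈ Finset.range n, X j * phiF (n - 1 - j)
      = ∑ p ∈ (Finset.range n).sigma (fun j => D (n - 1 - j)),
          fc p.2 • (X p.1 * mon p.2) := by
    rw [Finset.sum_sigma]
    refine Finset.sum_congr rfl fun j _ => ?_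
    rw [phiF, Finset.mul_sum]
    exact Finset.sum_congr rfl fun b _ => mul_smul_comm _ _ _
  -- LHS as a sigma sum
  have hL : phiF n = ∑ q ∈ (D n).sigma (fun b => b.support),
      ((q.1 q.2 : ℚ) * ((SS q.1 - 1).factorial : ℚ) / PP q.1) • mon q.1 := by
    rw [phiF, Finset.sum_sigma]
    refine Finset.sum_congr rfl fun b hb => .symm ?_
    dsimp only
    have hb0 : b ≠ 0 := fun h => by
      rw [h] at hb; have := mem_D.1 hb; simp [wt] at this; omega
    have hS : 0 < SS b := SS_pos hb0
    rw [← Finset.sum_smul]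
    congr 1
    rw [fc, ← Finset.sum_div]
    congr 1
    push_cast [← Finset.sum_mul, SS_sum_support]
    rw [← Nat.cast_sum]
    rw [SS_sum_support]
    rw [← Nat.cast_mul, Nat.mul_factorial_pred hS.ne']
  rw [hL, hR]
  refine Finset.sum_nbij' (i := fun q => (⟨q.2, q.1 - Finsupp.single q.2 1⟩ : Σ _ : ℕ, ℕ →₀ ℕ))
    (j := fun p => (⟨p.2 + Finsupp.single p.1 1, p.1⟩ : Σ _ : (ℕ →₀ ℕ), ℕ))
    ?_ ?_ ?_ ?_ ?_
  · rintro ⟨b, j⟩ hq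
    dsimp only
    rw [Finset.mem_sigma] at hq
    dsimp only at hq
    have hwt := mem_D.1 hq.1
    have hj := hq.2
    have h1 : 1 ≤ b j := Nat.one_le_iff_ne_zero.2 (Finsupp.mem_support_iff.1 hj)
    have hle : (j + 1) * b j ≤ n := hwt ▸ le_wt hj
    have hjn : j + 1 ≤ n := le_trans (Nat.le_mul_of_pos_right _ h1) hle
    have hcancel : (b - Finsupp.single j 1) + Finsupp.single j 1 = b :=
      tsub_add_cancel_of_le (Finsupp.single_le_iff.2 h1)
    rw [Finset.mem_sigma]
    dsimp only
    refine ⟨Finset.mem_range.2 (by omega), mem_D.2 ?_⟩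
    have := congrArg wt hcancel
    rw [wt_add, wt_single, mul_one] at this
    omega
  · rintro ⟨j, b'⟩ hp
    dsimp only
    rw [Finset.mem_sigma] at hp
    dsimp only at hp
    have hj := Finset.mem_range.1 hp.1
    have hwt := mem_D.1 hp.2
    rw [Finset.mem_sigma]
    dsimp only
    constructor
    · refine mem_D.2 ?_
      rw [wt_add, wt_single, mul_one, hwt]
      omega
    · rw [Finsupp.mem_support_iff, Finsupp.add_apply, Finsupp.single_eq_same]
      omega
  · rintro ⟨b, j⟩ hq
    rw [Finset.mem_sigma] at hq
    have h1 : 1 ≤ b j := Nat.one_le_iff_ne_zero.2 (Finsupp.mem_support_iff.1 hq.2)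
    have : (b - Finsupp.single j 1) + Finsupp.single j 1 = b :=
      tsub_add_cancel_of_le (Finsupp.single_le_iff.2 h1)
    simp [this]
  · rintro ⟨j, b'⟩ _
    simp
  · rintro ⟨b, j⟩ hq
    dsimp only
    rw [Finset.mem_sigma] at hq
    have h1 : 1 ≤ b j := Nat.one_le_iff_ne_zero.2 (Finsupp.mem_support_iff.1 hq.2)
    set b' := b - Finsupp.single j 1 with hb'
    have hcancel : b' + Finsupp.single j 1 = b :=
      tsub_add_cancel_of_le (Finsupp.single_le_iff.2 h1)
    -- term equality
    have hmon : mon b = mon b' * X j := by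
      rw [← hcancel, mon_add, mon_single, pow_one]
    have hSS : SS b = SS b' + 1 := by rw [← hcancel, SS_add, SS_single]
    have hbj : b j = b' j + 1 := by
      rw [← hcancel]; simp
    have hPP : PP b = PP b' * ((b' j : ℚ) + 1) := by
      have happ : (b' + Finsupp.single j 1 : ℕ →₀ ℕ) j = b' j + 1 := by
        rw [Finsupp.add_apply, Finsupp.single_eq_same]
      rw [PP, PP, ← Finsupp.mul_prod_erase' b j _ (fun i => by simp),
        ← Finsupp.mul_prod_erase' b' j _ (fun i => by simp),
        ← hcancel, erase_add_single, happ, Nat.factorial_succ]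
      push_cast
      ring
    have hPne := PP_ne_zero b'
    have hcast : ((b' j : ℚ) + 1) ≠ 0 := by positivity
    rw [hmon, hSS, hbj, hPP]
    rw [Nat.add_sub_cancel]
    rw [mul_comm (X j) (mon b'), ← smul_mul_assoc, ← smul_mul_assoc]
    congr 2
    rw [fc]
    field_simp
    push_cast
    ring

noncomputable section

lemma Phi_rec (n : ℕ) (hn : 1 ≤ n) :
    Phi n = X (n - 1) + ∑ j ∈ Finset.range (n - 1), X j * Phi (n - 1 - j) := by
  obtain ⟨m, rfl⟩ : ∃ m, n = m + 1 := ⟨n - 1, by omega⟩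
  rw [Phi_eq, phiF_rec _ hn]
  simp only [Nat.add_sub_cancel]
  rw [Finset.sum_range_succ, Nat.sub_self, phiF_zero, mul_one, add_comm]
  congr 1
  exact Finset.sum_congr rfl fun j _ => by rw [Phi_eq]

theorem Phi_subst_neg_Phi (k : ℕ) (hk : 1 ≤ k) :
    MvPolynomial.aeval (fun i : ℕ => -Phi (i + 1)) (Phi k)
      = -(MvPolynomial.X (k - 1) : MvPolynomial ℕ ℚ) := by
  revert hk
  induction k using Nat.strong_induction_on with
  | _ k IH =>
  intro hk
  have hk1 : k - 1 + 1 = k := Nat.succ_pred_eq_of_pos hk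
  rw [Phi_rec k hk, map_add, map_sum, aeval_X]
  have hterm : ∀ j ∈ Finset.range (k - 1),
      aeval (fun i : ℕ => -Phi (i + 1)) (X j * Phi (k - 1 - j))
        = (fun j => Phi (k - 1 - j) * X j) (k - 1 - 1 - j) := by
    intro j hj
    have hj' : j < k - 1 := Finset.mem_range.1 hj
    have h1 : 1 ≤ k - 1 - j := by omega
    have h2 : k - 1 - j < k := by omega
    have e1 : k - 1 - (k - 1 - 1 - j) = j + 1 := by omega
    have e2 : k - 1 - j - 1 = k - 1 - 1 - j := by omega
    rw [map_mul, aeval_X, IH _ h2 h1]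
    show -Phi (j + 1) * _ = _
    rw [e2]
    dsimp only
    rw [e1, neg_mul_neg]
  rw [Finset.sum_congr rfl hterm]
  have hrefl := Finset.sum_range_reflect (fun j => Phi (k - 1 - j) * X j) (k - 1)
  rw [hrefl]
  have hs : ∑ j ∈ Finset.range (k - 1), Phi (k - 1 - j) * X j
      = Phi k - X (k - 1) := by
    rw [Phi_rec k hk]
    rw [Finset.sum_congr rfl fun j _ => mul_comm (Phi (k - 1 - j)) (X j)]
    ring
  rw [hs]
  show -Phi (k - 1 + 1) + _ = _
  rw [hk1]
  ring

end
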